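/- arXiv:2309.14549 — 2 statements merged into one kernel-verified Lean document; each statement's English description precedes it below -/
import Mathlib

section
/- There is an absolute constant C such that for all positive integers y and l with l ∣ y and all real numbers i, j with 0 ≤ i ≤ j < y: | #{ c ∈ ℤ : i ≤ c ≤ j, l ∣ c, gcd(c/l, y/l) = 1 } − (φ(y/l)/y)·(j−i) | ≤ C·√(φ(y/l)). -/
open Finset ArithmeticFunction
open scoped ArithmeticFunction.Moebius ArithmeticFunction.zeta

lemma card_mult_Icc (e A B : ℤ) (he : 0 < e) :
    ((Finset.Icc A B).filter (fun d => e ∣ d)).card = (B / e - (A - 1) / e).toNat := by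
  have himg : (Finset.Icc A B).filter (fun d => e ∣ d)
      = (Finset.Ioc ((A - 1) / e) (B / e)).image (fun k => e * k) := by
    ext d
    simp only [Finset.mem_filter, Finset.mem_Icc, Finset.mem_image, Finset.mem_Ioc]
    constructor
    · rintro ⟨⟨hA, hB⟩, k, rfl⟩
      refine ⟨k, ⟨?_, ?_⟩, rfl⟩
      · rw [Int.ediv_lt_iff_lt_mul he, mul_comm]; omega
      · rw [Int.le_ediv_iff_mul_le he, mul_comm]; omega
    · rintro ⟨k, ⟨h1, h2⟩, rfl⟩
      rw [Int.ediv_lt_iff_lt_mul he, mul_comm] at h1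
      rw [Int.le_ediv_iff_mul_le he, mul_comm] at h2
      exact ⟨⟨by omega, by omega⟩, ⟨k, rfl⟩⟩
  rw [himg, Finset.card_image_of_injective _ (mul_right_injective₀ he.ne'), Int.card_Ioc]

lemma ediv_real_bounds (x e : ℤ) (he : 0 < e) :
    (x : ℝ) / e - 1 < ((x / e : ℤ) : ℝ) ∧ ((x / e : ℤ) : ℝ) ≤ (x : ℝ) / e := by
  have h := Int.mul_ediv_add_emod x e
  have h1 : 0 ≤ x % e := Int.emod_nonneg x he.ne'
  have h2 : x % e < e := Int.emod_lt_of_pos x he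
  have he' : (0 : ℝ) < e := by exact_mod_cast he
  have hh : (e : ℝ) * ((x/e : ℤ) : ℝ) + ((x % e : ℤ):ℝ) = x := by exact_mod_cast congrArg (Int.cast : ℤ → ℝ) h
  have h1' : (0:ℝ) ≤ ((x % e : ℤ):ℝ) := by exact_mod_cast h1
  have h2' : ((x % e : ℤ):ℝ) < e := by exact_mod_cast h2
  constructor
  · rw [sub_lt_iff_lt_add, div_lt_iff₀ he']
    nlinarith
  · rw [le_div_iff₀ he']
    nlinarith

lemma count_bound (e : ℤ) (he : 0 < e) (a b : ℝ) (hab : a ≤ b) :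
    |((((Finset.Icc ⌈a⌉ ⌊b⌋).filter (fun d => e ∣ d)).card : ℝ)) - (b - a) / e| ≤ 2 := by
  rw [card_mult_Icc _ _ _ he]
  set A := ⌈a⌉
  set B := ⌊b⌋
  set D : ℤ := B / e - (A - 1) / e with hD
  clear_value D
  have he' : (0 : ℝ) < e := by exact_mod_cast he
  have he1 : (1 : ℝ) ≤ e := by exact_mod_cast he
  set r1 : ℝ := ((B/e : ℤ) : ℝ) with hr1
  set r2 : ℝ := (((A-1)/e : ℤ) : ℝ) with hr2
  have f1 : (B:ℝ)/e - 1 < r1 := (ediv_real_bounds B e he).1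
  have f2 : r1 ≤ (B:ℝ)/e := (ediv_real_bounds B e he).2
  have f3 : ((A:ℝ)-1)/e - 1 < r2 := by
    have := (ediv_real_bounds (A-1) e he).1; push_cast at this; rw [hr2]; linarith
  have f4 : r2 ≤ ((A:ℝ)-1)/e := by
    have := (ediv_real_bounds (A-1) e he).2; push_cast at this; rw [hr2]; linarith
  have hBb : (B : ℝ) ≤ b := Int.floor_le b
  have hBb' : b - 1 < (B : ℝ) := Int.sub_one_lt_floor b
  have hAa : a ≤ (A : ℝ) := Int.le_ceil a
  have hAa' : (A : ℝ) < a + 1 := Int.ceil_lt_add_one a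
  have g1 : (B:ℝ)/e ≤ b/e := div_le_div_of_nonneg_right hBb he'.le
  have g2 : (b-1)/e ≤ (B:ℝ)/e := div_le_div_of_nonneg_right hBb'.le he'.le
  have g3 : (a-1)/e ≤ ((A:ℝ)-1)/e := by
    apply div_le_div_of_nonneg_right _ he'.le; linarith
  have g4 : ((A:ℝ)-1)/e ≤ a/e := by
    apply div_le_div_of_nonneg_right _ he'.le; linarith
  have hie : (1:ℝ)/(e:ℝ) ≤ 1 := by rw [div_le_one he']; exact he1
  have hie' : (0:ℝ) < 1/(e:ℝ) := by positivity
  have hDr : (D : ℝ) = r1 - r2 := by rw [hD]; push_cast; rfl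
  have e1 : b/e - ((a-1)/e) = (b-a)/e + 1/e := by ring
  have e2 : (b-1)/e - a/e = (b-a)/e - 1/e := by ring
  have hDub : (D : ℝ) ≤ (b - a)/e + 2 := by rw [hDr]; linarith
  have hDlb : (b - a)/e - 2 < (D : ℝ) := by rw [hDr]; linarith
  have hba : 0 ≤ (b - a)/e := div_nonneg (by linarith) he'.le
  rcases le_or_gt 0 D with hD0 | hD0
  · have : ((D.toNat : ℕ) : ℝ) = (D : ℝ) := by
      exact_mod_cast Int.toNat_of_nonneg hD0
    rw [this, abs_le]; constructor <;> linarith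
  · rw [Int.toNat_of_nonpos hD0.le]
    have : (D : ℝ) < 0 := by exact_mod_cast hD0
    rw [abs_le]; push_cast; constructor <;> linarith


lemma moebius_indicator (m : ℕ) (hm : m ≠ 0) (d : ℤ) :
    (∑ e ∈ m.divisors, if (e : ℤ) ∣ d then (μ e : ℤ) else 0)
      = if Int.gcd d m = 1 then 1 else 0 := by
  rw [← Finset.sum_filter]
  have hfe : m.divisors.filter (fun e : ℕ => (e : ℤ) ∣ d) = (Int.gcd d m).divisors := by
    ext e
    simp only [Finset.mem_filter, Nat.mem_divisors, Int.gcd]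
    constructor
    · rintro ⟨⟨h1, h2⟩, h3⟩
      refine ⟨Nat.dvd_gcd ?_ h1, ?_⟩
      · rwa [← Int.natCast_dvd]
      · exact Nat.gcd_ne_zero_right hm
    · rintro ⟨h1, h2⟩
      have h3 := Nat.dvd_gcd_iff.mp h1
      exact ⟨⟨h3.2, hm⟩, Int.natCast_dvd.mpr h3.1⟩
  rw [hfe]
  have h := congrArg (fun f => f (Int.gcd d m)) moebius_mul_coe_zeta
  simp only [coe_mul_zeta_apply] at h
  rw [h]
  rfl

lemma totient_div_eq (m : ℕ) (hm : 0 < m) :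
    (Nat.totient m : ℝ) / m = ∑ e ∈ m.divisors, (μ e : ℝ) / e := by
  have hinv := (sum_eq_iff_sum_smul_moebius_eq (R := ℝ)
      (f := fun n => (Nat.totient n : ℝ)) (g := fun n => (n : ℝ))).mp
    (fun n _ => by exact_mod_cast congrArg (Nat.cast : ℕ → ℝ) (Nat.sum_totient n)) m hm
  rw [Nat.sum_divisorsAntidiagonal (f := fun x y => (μ x) • (y : ℝ))] at hinv
  rw [div_eq_iff (by positivity : (m : ℝ) ≠ 0), Finset.sum_mul]
  rw [← hinv]
  apply Finset.sum_congr rfl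
  intro e he
  rw [Nat.mem_divisors] at he
  have he0 : (e : ℝ) ≠ 0 := by
    have := Nat.pos_of_mem_divisors (Nat.mem_divisors.mpr he); positivity
  rw [zsmul_eq_mul, Nat.cast_div he.1 he0]
  field_simp

lemma key_count (m : ℕ) (hm : 0 < m) (a b : ℝ) (hab : a ≤ b) :
    |({d : ℤ | a ≤ (d:ℝ) ∧ (d:ℝ) ≤ b ∧ Int.gcd d m = 1}.ncard : ℝ)
        - (Nat.totient m : ℝ) / m * (b - a)|
      ≤ 2 * ∑ e ∈ m.divisors, |(μ e : ℝ)| := by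
  set T : Finset ℤ := (Finset.Icc ⌈a⌉ ⌊b⌋).filter (fun d => Int.gcd d m = 1) with hT
  have hset : {d : ℤ | a ≤ (d:ℝ) ∧ (d:ℝ) ≤ b ∧ Int.gcd d m = 1} = ↑T := by
    ext d
    simp only [Set.mem_setOf_eq, hT, Finset.coe_filter, Finset.mem_Icc, Set.mem_setOf_eq,
      Int.ceil_le, Int.le_floor]
    tauto
  rw [hset, Set.ncard_coe_finset]
  have hcard : (T.card : ℤ) = ∑ e ∈ m.divisors,
      (μ e) * (((Finset.Icc ⌈a⌉ ⌊b⌋).filter (fun d => (e:ℤ) ∣ d)).card : ℤ) := by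
    rw [hT, Finset.card_filter, Nat.cast_sum]
    have hstep : ∀ d ∈ Finset.Icc ⌈a⌉ ⌊b⌋, (((if Int.gcd d m = 1 then 1 else 0 : ℕ)) : ℤ)
        = ∑ e ∈ m.divisors, if (e:ℤ) ∣ d then (μ e : ℤ) else 0 := by
      intro d _
      rw [moebius_indicator m hm.ne' d]
      split <;> simp
    rw [Finset.sum_congr rfl hstep, Finset.sum_comm]
    apply Finset.sum_congr rfl
    intro e _
    rw [← Finset.sum_filter, Finset.sum_const, nsmul_eq_mul, mul_comm]
  have hcardR : (T.card : ℝ) = ∑ e ∈ m.divisors,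
      (μ e : ℝ) * (((Finset.Icc ⌈a⌉ ⌊b⌋).filter (fun d => (e:ℤ) ∣ d)).card : ℝ) := by
    exact_mod_cast congrArg (fun z : ℤ => (z : ℝ)) hcard
  have hmain : (Nat.totient m : ℝ) / m * (b - a)
      = ∑ e ∈ m.divisors, (μ e : ℝ) * ((b - a) / e) := by
    rw [totient_div_eq m hm, Finset.sum_mul]
    apply Finset.sum_congr rfl; intro e _; ring
  rw [hcardR, hmain, ← Finset.sum_sub_distrib]
  refine (Finset.abs_sum_le_sum_abs _ _).trans ?_
  rw [Finset.mul_sum]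
  apply Finset.sum_le_sum
  intro e he
  have he1 : (0:ℤ) < (e:ℤ) := by
    exact_mod_cast Nat.pos_of_mem_divisors he
  rw [← mul_sub, abs_mul]
  calc |(μ e : ℝ)| * |(((Finset.Icc ⌈a⌉ ⌊b⌋).filter (fun d => (e:ℤ) ∣ d)).card : ℝ) - (b - a) / (e:ℤ)|
      ≤ |(μ e : ℝ)| * 2 := by
        apply mul_le_mul_of_nonneg_left _ (abs_nonneg _)
        exact count_bound (e:ℤ) he1 a b hab
    _ = 2 * |(μ e : ℝ)| := by ring


def sqmu : ArithmeticFunction ℕ := ⟨fun n => (μ n).natAbs, by simp⟩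

lemma sqmu_apply (n : ℕ) : sqmu n = (μ n).natAbs := rfl

lemma sqmu_mult : sqmu.IsMultiplicative := by
  constructor
  · simp [sqmu_apply]
  · intro m n h
    simp only [sqmu_apply, isMultiplicative_moebius.map_mul_of_coprime h, Int.natAbs_mul]

lemma Emult : (ζ * sqmu).IsMultiplicative := isMultiplicative_zeta.mul sqmu_mult

lemma E_prime_pow {p n : ℕ} (hp : p.Prime) (hn : 0 < n) : (ζ * sqmu) (p ^ n) = 2 := by
  rw [zeta_mul_apply, Nat.sum_divisors_prime_pow hp]
  obtain ⟨k, rfl⟩ : ∃ k, n = k + 1 := ⟨n - 1, by omega⟩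
  rw [Finset.sum_range_succ', Finset.sum_range_succ']
  have h2 : ∀ x : ℕ, sqmu (p ^ (x + 1 + 1)) = 0 := by
    intro x
    simp [sqmu_apply, moebius_apply_prime_pow hp (by omega : x + 1 + 1 ≠ 0)]
  simp [h2, sqmu_apply, moebius_apply_prime hp]

lemma dvd_transfer {q p n a : ℕ} (hq : q.Prime) (hp : p.Prime) (hqp : q ≠ p) :
    q ∣ p ^ n * a ↔ q ∣ a := by
  have hc : Nat.Coprime q (p ^ n) := ((Nat.coprime_primes hq hp).mpr hqp).pow_right n
  constructor
  · exact fun h => hc.dvd_of_dvd_mul_left h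
  · exact fun h => Dvd.dvd.mul_left h _

lemma step_help (E2w A P c : ℕ) (h : E2w ≤ 8 * A) (hc : c ≤ P) : c * E2w ≤ 8 * (P * A) := by
  calc c * E2w ≤ c * (8 * A) := Nat.mul_le_mul_left _ h
    _ = 8 * (c * A) := by ring
    _ ≤ 8 * (P * A) := Nat.mul_le_mul_left _ (Nat.mul_le_mul_right _ hc)

lemma E_sq_bound : ∀ m : ℕ, m ≠ 0 →
    ((ζ * sqmu) m) ^ 2 * (if 2 ∣ m then 1 else 4) * (if 3 ∣ m then 1 else 2)
      ≤ 8 * Nat.totient m := by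
  intro m
  induction m using Nat.recOnPrimePow with
  | zero => intro h; exact absurd rfl h
  | one =>
    intro _
    rw [Emult.map_one]
    norm_num
  | prime_pow_mul a p n hp hpa hn ih =>
    intro _
    have ha : a ≠ 0 := fun h => hpa (h ▸ dvd_zero p)
    have hcop : Nat.Coprime (p ^ n) a :=
      Nat.Coprime.pow_left n ((Nat.Prime.coprime_iff_not_dvd hp).mpr hpa)
    have hE : (ζ * sqmu) (p ^ n * a) = 2 * (ζ * sqmu) a := by
      rw [Emult.map_mul_of_coprime hcop, E_prime_pow hp hn]
    have hphi : Nat.totient (p ^ n * a) = Nat.totient (p ^ n) * Nat.totient a :=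
      Nat.totient_mul hcop
    have hphia : 1 ≤ Nat.totient a := (Nat.totient_pos.mpr (Nat.pos_of_ne_zero ha))
    have hphip : Nat.totient (p ^ n) = p ^ (n - 1) * (p - 1) := Nat.totient_prime_pow hp hn
    have hppos : 1 ≤ p ^ (n - 1) := Nat.one_le_pow _ _ hp.pos
    have iha := ih ha
    rw [hE, hphi]
    rcases eq_or_ne p 2 with rfl | hp2
    · rw [if_pos (Dvd.dvd.mul_right (dvd_pow_self 2 hn.ne') a)]
      simp only [dvd_transfer Nat.prime_three hp (by norm_num : (3:ℕ) ≠ 2)]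
      rw [if_neg hpa] at iha
      have h1 : 1 ≤ Nat.totient (2 ^ n) := Nat.totient_pos.mpr (by positivity)
      set w3 : ℕ := if 3 ∣ a then 1 else 2 with hw3
      have heq : (2 * (ζ * sqmu) a) ^ 2 * 1 * w3 = 1 * ((ζ * sqmu) a ^ 2 * 4 * w3) := by ring
      rw [heq]
      exact step_help ((ζ * sqmu) a ^ 2 * 4 * w3) a.totient ((2 ^ n).totient) 1 iha h1
    · rcases eq_or_ne p 3 with rfl | hp3
      · rw [if_pos (Dvd.dvd.mul_right (dvd_pow_self 3 hn.ne') a)]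
        simp only [dvd_transfer Nat.prime_two hp (by norm_num : (2:ℕ) ≠ 3)]
        rw [if_neg hpa] at iha
        have h2 : 2 ≤ Nat.totient (3 ^ n) := by
          rw [hphip]
          calc 2 = 1 * (3 - 1) := by norm_num
            _ ≤ 3 ^ (n - 1) * (3 - 1) := Nat.mul_le_mul_right _ hppos
        set w2 : ℕ := if 2 ∣ a then 1 else 4 with hw2
        have heq : (2 * (ζ * sqmu) a) ^ 2 * w2 * 1 = 2 * ((ζ * sqmu) a ^ 2 * w2 * 2) := by ring
        rw [heq]
        exact step_help ((ζ * sqmu) a ^ 2 * w2 * 2) a.totient ((3 ^ n).totient) 2 iha h2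
      · have hp5 : 5 ≤ p := by
          by_contra hcon
          push_neg at hcon
          have h2 := hp.two_le
          interval_cases p
          · exact hp2 rfl
          · exact hp3 rfl
          · norm_num at hp
        simp only [dvd_transfer Nat.prime_two hp (fun h => hp2 h.symm),
          dvd_transfer Nat.prime_three hp (fun h => hp3 h.symm)]
        have h4 : 4 ≤ Nat.totient (p ^ n) := by
          rw [hphip]
          calc 4 = 1 * 4 := by norm_num
            _ ≤ p ^ (n - 1) * (p - 1) := Nat.mul_le_mul hppos (by omega)
        set w2 : ℕ := if 2 ∣ a then 1 else 4 with hw2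
        set w3 : ℕ := if 3 ∣ a then 1 else 2 with hw3
        have heq : (2 * (ζ * sqmu) a) ^ 2 * w2 * w3 = 4 * ((ζ * sqmu) a ^ 2 * w2 * w3) := by ring
        rw [heq]
        exact step_help ((ζ * sqmu) a ^ 2 * w2 * w3) a.totient ((p ^ n).totient) 4 iha h4


lemma sum_abs_mu (m : ℕ) : ∑ e ∈ m.divisors, |(μ e : ℝ)| = (((ζ * sqmu) m : ℕ) : ℝ) := by
  rw [zeta_mul_apply, Nat.cast_sum]
  apply Finset.sum_congr rfl
  intro e _
  rw [sqmu_apply, Nat.cast_natAbs, Int.cast_abs]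

lemma E_le_sqrt (m : ℕ) (hm : m ≠ 0) :
    (((ζ * sqmu) m : ℕ) : ℝ) ≤ 3 * Real.sqrt (Nat.totient m) := by
  have hb := E_sq_bound m hm
  have hb' : ((ζ * sqmu) m) ^ 2 ≤ 8 * Nat.totient m := by
    refine le_trans ?_ hb
    split_ifs <;> nlinarith [Nat.zero_le (((ζ * sqmu) m) ^ 2)]
  have hbR : (((ζ * sqmu) m : ℕ) : ℝ) ^ 2 ≤ 8 * (Nat.totient m : ℝ) := by exact_mod_cast hb'
  have h1 : (((ζ * sqmu) m : ℕ) : ℝ) ≤ Real.sqrt (8 * (Nat.totient m : ℝ)) := by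
    rw [show (((ζ * sqmu) m : ℕ) : ℝ) = Real.sqrt ((((ζ * sqmu) m : ℕ) : ℝ) ^ 2) from
      (Real.sqrt_sq (by positivity)).symm]
    exact Real.sqrt_le_sqrt hbR
  refine h1.trans ?_
  rw [Real.sqrt_mul (by norm_num : (0:ℝ) ≤ 8)]
  have h8 : Real.sqrt 8 ≤ 3 := by
    nlinarith [Real.sq_sqrt (by norm_num : (0:ℝ) ≤ 8), Real.sqrt_nonneg 8]
  have := Real.sqrt_nonneg (Nat.totient m : ℝ)
  nlinarith

/-- Erdős–Turán-type equidistribution: there is an absolute constant `C` such that for all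
positive integers `l ∣ y` and all reals `0 ≤ i ≤ j < y`,
`|#{c ∈ ℤ : i ≤ c ≤ j, l ∣ c, gcd(c/l, y/l) = 1} - (φ(y/l)/y)(j-i)| ≤ C √(φ(y/l))`. -/
theorem stmt_15 :
    ∃ C : ℝ, ∀ y l : ℕ, 0 < y → 0 < l → l ∣ y →
      ∀ i j : ℝ, 0 ≤ i → i ≤ j → j < y →
        |(Set.ncard {c : ℤ | i ≤ (c : ℝ) ∧ (c : ℝ) ≤ j ∧ (l : ℤ) ∣ c ∧
            Int.gcd (c / (l : ℤ)) ((y / l : ℕ) : ℤ) = 1} : ℝ)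
          - ((Nat.totient (y / l) : ℝ) / (y : ℝ)) * (j - i)|
          ≤ C * Real.sqrt (Nat.totient (y / l)) := by
  refine ⟨6, ?_⟩
  intro y l hy0 hl0 hdvd i j hi hij hjy
  set m : ℕ := y / l with hm_def
  have hm : 0 < m := Nat.div_pos (Nat.le_of_dvd hy0 hdvd) hl0
  have hlm : l * m = y := Nat.mul_div_cancel' hdvd
  have hl' : (0:ℝ) < (l:ℝ) := by exact_mod_cast hl0
  have hlz : ((l:ℕ):ℤ) ≠ 0 := by exact_mod_cast hl0.ne'
  have hyR : (y : ℝ) = (l : ℝ) * m := by exact_mod_cast hlm.symm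
  have hset : {c : ℤ | i ≤ (c : ℝ) ∧ (c : ℝ) ≤ j ∧ (l : ℤ) ∣ c ∧
        Int.gcd (c / (l : ℤ)) ((m : ℕ) : ℤ) = 1}
      = (fun d : ℤ => (l : ℤ) * d) ''
        {d : ℤ | i / l ≤ (d:ℝ) ∧ (d:ℝ) ≤ j / l ∧ Int.gcd d ((m : ℕ) : ℤ) = 1} := by
    ext c
    simp only [Set.mem_setOf_eq, Set.mem_image]
    constructor
    · rintro ⟨h1, h2, ⟨d, rfl⟩, h4⟩
      rw [Int.mul_ediv_cancel_left d hlz] at h4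
      push_cast at h1 h2
      refine ⟨d, ⟨?_, ?_, h4⟩, rfl⟩
      · rw [div_le_iff₀ hl']; linarith [mul_comm (l:ℝ) (d:ℝ)]
      · rw [le_div_iff₀ hl']; linarith [mul_comm (l:ℝ) (d:ℝ)]
    · rintro ⟨d, ⟨hd1, hd2, hd3⟩, rfl⟩
      rw [div_le_iff₀ hl'] at hd1
      rw [le_div_iff₀ hl'] at hd2
      refine ⟨?_, ?_, Dvd.intro d rfl, ?_⟩
      · push_cast; linarith [mul_comm (l:ℝ) (d:ℝ)]
      · push_cast; linarith [mul_comm (l:ℝ) (d:ℝ)]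
      · rwa [Int.mul_ediv_cancel_left d hlz]
  rw [hset, Set.ncard_image_of_injective _ (mul_right_injective₀ hlz)]
  have hmain : (Nat.totient m : ℝ) / (y : ℝ) * (j - i)
      = (Nat.totient m : ℝ) / m * (j / l - i / l) := by
    have hmR : ((m:ℕ):ℝ) ≠ 0 := by positivity
    rw [hyR]
    field_simp [hl'.ne', hmR]
  rw [hmain]
  have hab : i / l ≤ j / l := div_le_div_of_nonneg_right hij hl'.le
  have hkey := key_count m hm (i / l) (j / l) hab
  refine hkey.trans ?_
  rw [sum_abs_mu]
  have hE := E_le_sqrt m hm.ne'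
  linarith [Real.sqrt_nonneg (Nat.totient m : ℝ)]
end

section
/- For all ε > 0 and δ > 0 there is a constant C_{ε,δ} such that for every real B ≥ 1 and every integer y with 1 ≤ y ≤ B: Σ F(r) ≤ C_{ε,δ}·B^{1/2+ε+3δ}·y^{9/10}, where the sum is over pairs (r,c) of positive integers with (r+c²)·√|r−c²| ≤ B·y, y² ∣ (r−c²), r ≠ c², and B^{1/2−δ}/y^{3/10} ≤ c ≤ B^{1/2}. -/
open scoped Classical

noncomputable section

/-- `F(n)`: the number of ordered pairs `(u,v)` of positive integers with `u² + v² = n`. -/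
def Fcount (n : ℕ) : ℕ :=
  Nat.card {p : ℕ × ℕ // 0 < p.1 ∧ 0 < p.2 ∧ p.1 ^ 2 + p.2 ^ 2 = n}


def Rcard (m : ℕ) : ℕ := Nat.card {x : ZMod m // x ^ 2 = -1}

lemma Rcard_mul {a b : ℕ} (h : a.Coprime b) : Rcard (a * b) = Rcard a * Rcard b := by
  have e := ZMod.chineseRemainder h
  have e1 : {x : ZMod (a*b) // x ^ 2 = -1} ≃ {y : ZMod a × ZMod b // y ^ 2 = -1} :=
    e.toEquiv.subtypeEquiv (fun x => by
      show x ^ 2 = -1 ↔ (e x) ^ 2 = -1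
      constructor
      · intro hx; rw [← map_pow, hx, map_neg, map_one]
      · intro hx; exact e.injective (by rw [map_pow, hx, map_neg, map_one]))
  have e2 : {y : ZMod a × ZMod b // y ^ 2 = -1} ≃
      {u : ZMod a // u ^ 2 = -1} × {v : ZMod b // v ^ 2 = -1} := by
    refine (Equiv.subtypeEquivRight ?_).trans Equiv.subtypeProdEquivProd
    intro y
    rw [Prod.ext_iff]
    simp
  rw [Rcard, Nat.card_congr (e1.trans e2), Nat.card_prod]; rfl

lemma cast_val_int_zero_iff {n : ℕ} [NeZero n] (x : ZMod n) :
    (((x.val : ℤ)) : ZMod n) = x := by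
  push_cast
  rw [ZMod.natCast_val, ZMod.cast_id]

lemma int_sq_add_one_dvd {n : ℕ} [NeZero n] (x : ZMod n) (hx : x ^ 2 = -1) :
    (n : ℤ) ∣ ((x.val : ℤ) ^ 2 + 1) := by
  rw [← ZMod.intCast_zmod_eq_zero_iff_dvd]
  push_cast
  rw [ZMod.natCast_val, ZMod.cast_id, hx]
  ring

lemma root_dichotomy {p k : ℕ} (hp : p.Prime) (hp2 : p ≠ 2) (hk : 0 < k)
    (x y : ZMod (p ^ k)) (hx : x ^ 2 = -1) (hy : y ^ 2 = -1) : y = x ∨ y = -x := by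
  haveI : NeZero (p ^ k) := ⟨pow_ne_zero _ hp.ne_zero⟩
  set A : ℤ := (x.val : ℤ) with hA
  set Bv : ℤ := (y.val : ℤ) with hB
  have hdvdA : (p : ℤ) ^ k ∣ A ^ 2 + 1 := by
    have := int_sq_add_one_dvd x hx
    push_cast at this ⊢
    exact this
  have hdvdB : (p : ℤ) ^ k ∣ Bv ^ 2 + 1 := by
    have := int_sq_add_one_dvd y hy
    push_cast at this ⊢
    exact this
  have key : (p : ℤ) ^ k ∣ (A - Bv) * (A + Bv) := by
    have h : (A - Bv) * (A + Bv) = (A ^ 2 + 1) - (Bv ^ 2 + 1) := by ring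
    rw [h]; exact dvd_sub hdvdA hdvdB
  have hpZ : Prime ((p : ℤ)) := Int.prime_iff_natAbs_prime.mpr (by simpa using hp)
  have hnot : ¬ ((p : ℤ) ∣ (A - Bv) ∧ (p : ℤ) ∣ (A + Bv)) := by
    rintro ⟨h1, h2⟩
    have h3 : (p : ℤ) ∣ 2 * A := by
      have h4 : 2 * A = (A + Bv) + (A - Bv) := by ring
      rw [h4]; exact dvd_add h2 h1
    rcases (Prime.dvd_mul hpZ).mp h3 with h5 | h5
    · have : p ∣ 2 := by exact_mod_cast h5
      exact hp2 ((Nat.prime_dvd_prime_iff_eq hp Nat.prime_two).mp this)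
    · have h6 : (p : ℤ) ∣ A ^ 2 := dvd_pow h5 (by norm_num)
      have h7 : (p : ℤ) ∣ A ^ 2 + 1 := dvd_trans (dvd_pow_self (p : ℤ) hk.ne') hdvdA
      have h8 : (p : ℤ) ∣ 1 := by
        have h9 : (1 : ℤ) = (A ^ 2 + 1) - A ^ 2 := by ring
        rw [h9]; exact dvd_sub h7 h6
      exact hpZ.not_unit (isUnit_of_dvd_one h8)
  by_cases hd : (p : ℤ) ∣ (A + Bv)
  · right
    have hnd : ¬ (p : ℤ) ∣ (A - Bv) := fun h => hnot ⟨h, hd⟩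
    have hk2 : (p : ℤ) ^ k ∣ (A + Bv) := hpZ.pow_dvd_of_dvd_mul_left k hnd key
    have h0 : ((A + Bv : ℤ) : ZMod (p ^ k)) = 0 := by
      rw [ZMod.intCast_zmod_eq_zero_iff_dvd]
      exact_mod_cast hk2
    rw [Int.cast_add, cast_val_int_zero_iff, cast_val_int_zero_iff] at h0
    exact eq_neg_of_add_eq_zero_right h0
  · left
    have hk2 : (p : ℤ) ^ k ∣ (A - Bv) := hpZ.pow_dvd_of_dvd_mul_right k hd key
    have h0 : ((A - Bv : ℤ) : ZMod (p ^ k)) = 0 := by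
      rw [ZMod.intCast_zmod_eq_zero_iff_dvd]
      exact_mod_cast hk2
    rw [Int.cast_sub, cast_val_int_zero_iff, cast_val_int_zero_iff] at h0
    exact (sub_eq_zero.mp h0).symm

lemma Rcard_le_two_prime_pow {p k : ℕ} (hp : p.Prime) (hk : 0 < k) : Rcard (p ^ k) ≤ 2 := by
  haveI : NeZero (p ^ k) := ⟨pow_ne_zero _ hp.ne_zero⟩
  by_cases hp2 : p = 2
  · subst hp2
    rcases Nat.lt_or_ge k 2 with hk2 | hk2
    · have hk1 : k = 1 := by omega
      subst hk1
      calc Rcard (2 ^ 1) ≤ Nat.card (ZMod (2 ^ 1)) :=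
            Nat.card_le_card_of_injective Subtype.val Subtype.val_injective
        _ = 2 := by rw [Nat.card_eq_fintype_card, ZMod.card]; norm_num
    · have hempty : IsEmpty {x : ZMod (2 ^ k) // x ^ 2 = -1} := by
        constructor; rintro ⟨x, hx⟩
        have h4 : (4 : ℤ) ∣ ((x.val : ℤ) ^ 2 + 1) := by
          refine dvd_trans ?_ (int_sq_add_one_dvd x hx)
        -- (4 : ℤ) ∣ ((2^k : ℕ) : ℤ)
          have h5 : ((2 ^ k : ℕ) : ℤ) = 2 ^ k := by push_cast; ring
          rw [h5]
          have h6 : (4 : ℤ) = 2 ^ 2 := by norm_num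
          rw [h6]; exact pow_dvd_pow 2 hk2
        rcases Int.even_or_odd (x.val : ℤ) with ⟨t, ht⟩ | ⟨t, ht⟩
        · obtain ⟨c, hc⟩ := h4
          rw [ht] at hc
          have : (4 : ℤ) ∣ 1 := ⟨c - t ^ 2, by linear_combination hc⟩
          norm_num at this
        · obtain ⟨c, hc⟩ := h4
          rw [ht] at hc
          have : (4 : ℤ) ∣ 2 := ⟨c - t ^ 2 - t, by linear_combination hc⟩
          norm_num at this
      rw [Rcard, Nat.card_of_isEmpty]; omega
  · by_cases hne : Nonempty {x : ZMod (p ^ k) // x ^ 2 = -1}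
    · obtain ⟨x0⟩ := hne
      have hinj : Function.Injective
          (fun y : {x : ZMod (p ^ k) // x ^ 2 = -1} => decide (y.1 = x0.1)) := by
        intro y z hyz
        simp only [decide_eq_decide] at hyz
        by_cases hy : y.1 = x0.1
        · exact Subtype.ext (hy.trans (hyz.mp hy).symm)
        · have hz : ¬ z.1 = x0.1 := fun h => hy (hyz.mpr h)
          have h1 := (root_dichotomy hp hp2 hk x0.1 y.1 x0.2 y.2).resolve_left hy
          have h2 := (root_dichotomy hp hp2 hk x0.1 z.1 x0.2 z.2).resolve_left hz
          exact Subtype.ext (h1.trans h2.symm)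
      calc Rcard (p ^ k) ≤ Nat.card Bool := Nat.card_le_card_of_injective _ hinj
        _ = 2 := by simp [Nat.card_eq_fintype_card]
    · rw [Rcard, @Nat.card_of_isEmpty _ (not_nonempty_iff.mp hne)]; omega

lemma Rcard_le_card_divisors : ∀ m : ℕ, m ≠ 0 → Rcard m ≤ m.divisors.card := by
  intro m
  induction m using Nat.recOnPosPrimePosCoprime with
  | prime_pow p k hp' hk =>
      intro _
      have hpp : p.Prime := hp'
      rw [Nat.divisors_prime_pow hpp, Finset.card_map, Finset.card_range]
      exact (Rcard_le_two_prime_pow hpp hk).trans (by omega)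
  | zero => intro h; exact absurd rfl h
  | one =>
      intro _
      have : Rcard 1 ≤ Nat.card (ZMod 1) :=
        Nat.card_le_card_of_injective Subtype.val Subtype.val_injective
      simpa [Nat.card_eq_fintype_card] using this
  | coprime a b ha hb hab iha ihb =>
      intro _
      rw [Rcard_mul hab, hab.card_divisors_mul]
      exact Nat.mul_le_mul (iha (by omega)) (ihb (by omega))

def Treps (n : ℕ) : Finset (ℕ × ℕ) :=
  (Finset.range (n + 1) ×ˢ Finset.range (n + 1)).filter
    (fun p => 0 < p.1 ∧ 0 < p.2 ∧ p.1 ^ 2 + p.2 ^ 2 = n)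

lemma Fcount_eq_card (n : ℕ) : Fcount n = (Treps n).card := by
  have hset : {p : ℕ × ℕ | 0 < p.1 ∧ 0 < p.2 ∧ p.1 ^ 2 + p.2 ^ 2 = n} = ↑(Treps n) := by
    ext p
    simp only [Treps, Finset.coe_filter, Set.mem_setOf_eq, Finset.mem_product,
      Finset.mem_range]
    constructor
    · rintro ⟨h1, h2, h3⟩
      refine ⟨⟨?_, ?_⟩, h1, h2, h3⟩
      · have : p.1 ≤ p.1 ^ 2 := Nat.le_self_pow (by norm_num) _
        omega
      · have : p.2 ≤ p.2 ^ 2 := Nat.le_self_pow (by norm_num) _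
        omega
    · rintro ⟨_, h⟩; exact h
  rw [Fcount]
  have h1 : Nat.card {p : ℕ × ℕ // 0 < p.1 ∧ 0 < p.2 ∧ p.1 ^ 2 + p.2 ^ 2 = n}
      = Nat.card ({p : ℕ × ℕ | 0 < p.1 ∧ 0 < p.2 ∧ p.1 ^ 2 + p.2 ^ 2 = n} : Set (ℕ × ℕ)) := rfl
  rw [h1, Nat.card_coe_set_eq, hset, Set.ncard_coe_finset]

lemma packet {n g : ℕ} {p : ℕ × ℕ} (hp : p ∈ Treps n) (hg : Nat.gcd p.1 p.2 = g) :
    0 < g ∧ g ^ 2 ∣ n ∧ 0 < p.1 / g ∧ 0 < p.2 / g ∧ Nat.Coprime (p.1 / g) (p.2 / g) ∧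
      (p.1 / g) ^ 2 + (p.2 / g) ^ 2 = n / g ^ 2 ∧ p.1 = g * (p.1 / g) ∧ p.2 = g * (p.2 / g) := by
  simp only [Treps, Finset.mem_filter] at hp
  obtain ⟨-, h1, h2, h3⟩ := hp
  have hgpos : 0 < g := hg ▸ Nat.gcd_pos_of_pos_left _ h1
  have hd1 : g ∣ p.1 := hg ▸ Nat.gcd_dvd_left _ _
  have hd2 : g ∣ p.2 := hg ▸ Nat.gcd_dvd_right _ _
  have he1 : p.1 = g * (p.1 / g) := (Nat.mul_div_cancel' hd1).symm
  have he2 : p.2 = g * (p.2 / g) := (Nat.mul_div_cancel' hd2).symm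
  have hn' : n = g ^ 2 * ((p.1 / g) ^ 2 + (p.2 / g) ^ 2) := by
    calc n = (g * (p.1 / g)) ^ 2 + (g * (p.2 / g)) ^ 2 := by rw [← he1, ← he2]; omega
      _ = g ^ 2 * ((p.1 / g) ^ 2 + (p.2 / g) ^ 2) := by ring
  have hsq : g ^ 2 ∣ n := ⟨_, hn'⟩
  have hm : (p.1 / g) ^ 2 + (p.2 / g) ^ 2 = n / g ^ 2 := by
    rw [hn', Nat.mul_div_cancel_left _ (by positivity)]
  have hco : Nat.Coprime (p.1 / g) (p.2 / g) := by
    rw [← hg]; exact Nat.coprime_div_gcd_div_gcd (hg ▸ hgpos)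
  exact ⟨hgpos, hsq, Nat.div_pos (Nat.le_of_dvd h1 hd1) hgpos,
    Nat.div_pos (Nat.le_of_dvd h2 hd2) hgpos, hco, hm, he1, he2⟩

lemma coprime_snd_mod {u' v' m : ℕ} (hco : Nat.Coprime u' v')
    (hsum : u' ^ 2 + v' ^ 2 = m) : Nat.Coprime v' m := by
  have h1 : Nat.Coprime v' (u' ^ 2) := Nat.Coprime.pow_right 2 hco.symm
  have h2 : Nat.Coprime v' (u' ^ 2 + v' * v') :=
    (Nat.coprime_add_mul_left_right v' (u' ^ 2) v').mpr h1
  have h3 : u' ^ 2 + v' * v' = m := by rw [← hsum]; ring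
  rwa [h3] at h2

lemma root_of_primitive {m u v : ℕ} [NeZero m] (hco : Nat.Coprime u v)
    (hsum : u ^ 2 + v ^ 2 = m) : ((u : ZMod m) * (v : ZMod m)⁻¹) ^ 2 = -1 := by
  have hvm : Nat.Coprime v m := coprime_snd_mod hco hsum
  have hm0 : ((u : ZMod m)) ^ 2 = -((v : ZMod m)) ^ 2 := by
    have h0 : ((u ^ 2 + v ^ 2 : ℕ) : ZMod m) = 0 := by
      rw [hsum]; exact ZMod.natCast_self m
    push_cast at h0
    linear_combination h0
  calc ((u : ZMod m) * (v : ZMod m)⁻¹) ^ 2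
      = (u : ZMod m) ^ 2 * ((v : ZMod m)⁻¹) ^ 2 := by ring
    _ = -(((v : ZMod m) * (v : ZMod m)⁻¹) ^ 2) := by rw [hm0]; ring
    _ = -1 := by rw [ZMod.coe_mul_inv_eq_one _ hvm]; norm_num

set_option maxHeartbeats 1000000 in
lemma inj_core {m u1 v1 u2 v2 : ℕ} [NeZero m]
    (hu1 : 0 < u1) (hv1 : 0 < v1) (hu2 : 0 < u2) (hv2 : 0 < v2)
    (hco1 : Nat.Coprime u1 v1) (hco2 : Nat.Coprime u2 v2)
    (hsum1 : u1 ^ 2 + v1 ^ 2 = m) (hsum2 : u2 ^ 2 + v2 ^ 2 = m)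
    (hpq : (u1 : ZMod m) * (v1 : ZMod m)⁻¹ = (u2 : ZMod m) * (v2 : ZMod m)⁻¹) :
    u1 = u2 ∧ v1 = v2 := by
  have hv1m : Nat.Coprime v1 m := coprime_snd_mod hco1 hsum1
  have hv2m : Nat.Coprime v2 m := coprime_snd_mod hco2 hsum2
  have hkey : ((u1 : ZMod m)) * (v2 : ZMod m) = ((u2 : ZMod m)) * (v1 : ZMod m) := by
    have e1 : ((u1 : ZMod m) * (v1 : ZMod m)⁻¹) * ((v1 : ZMod m) * (v2 : ZMod m))
        = (u1 : ZMod m) * (v2 : ZMod m) := by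
      calc ((u1 : ZMod m) * (v1 : ZMod m)⁻¹) * ((v1 : ZMod m) * (v2 : ZMod m))
          = ((v1 : ZMod m) * (v1 : ZMod m)⁻¹) * ((u1 : ZMod m) * (v2 : ZMod m)) := by ring
        _ = (u1 : ZMod m) * (v2 : ZMod m) := by
            rw [ZMod.coe_mul_inv_eq_one _ hv1m, one_mul]
    have e2 : ((u2 : ZMod m) * (v2 : ZMod m)⁻¹) * ((v1 : ZMod m) * (v2 : ZMod m))
        = (u2 : ZMod m) * (v1 : ZMod m) := by
      calc ((u2 : ZMod m) * (v2 : ZMod m)⁻¹) * ((v1 : ZMod m) * (v2 : ZMod m))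
          = ((v2 : ZMod m) * (v2 : ZMod m)⁻¹) * ((u2 : ZMod m) * (v1 : ZMod m)) := by ring
        _ = (u2 : ZMod m) * (v1 : ZMod m) := by
            rw [ZMod.coe_mul_inv_eq_one _ hv2m, one_mul]
    rw [← e1, ← e2, hpq]
  have hmne : m ≠ 0 := NeZero.ne m
  have hs1 : (u1 : ℤ) ^ 2 + (v1 : ℤ) ^ 2 = (m : ℤ) := by exact_mod_cast hsum1
  have hs2 : (u2 : ℤ) ^ 2 + (v2 : ℤ) ^ 2 = (m : ℤ) := by exact_mod_cast hsum2
  have hb1 : (u1 : ℤ) ^ 2 ≤ (m : ℤ) - 1 := by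
    have h9 : (1 : ℤ) ≤ (v1 : ℤ) := by exact_mod_cast hv1
    nlinarith
  have hb2 : (v2 : ℤ) ^ 2 ≤ (m : ℤ) - 1 := by
    have h9 : (1 : ℤ) ≤ (u2 : ℤ) := by exact_mod_cast hu2
    nlinarith
  have hb3 : (u2 : ℤ) ^ 2 ≤ (m : ℤ) - 1 := by
    have h9 : (1 : ℤ) ≤ (v2 : ℤ) := by exact_mod_cast hv2
    nlinarith
  have hb4 : (v1 : ℤ) ^ 2 ≤ (m : ℤ) - 1 := by
    have h9 : (1 : ℤ) ≤ (u1 : ℤ) := by exact_mod_cast hu1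
    nlinarith
  have hm1 : (1 : ℤ) ≤ (m : ℤ) := by
    have : 0 < m := Nat.pos_of_ne_zero hmne
    exact_mod_cast this
  have hlt1 : u1 * v2 < m := by
    have hZ : (u1 : ℤ) * (v2 : ℤ) < (m : ℤ) := by
      by_contra hcon
      push_neg at hcon
      have e : (u1:ℤ)^2 * (v2:ℤ)^2 ≤ ((m:ℤ)-1)*((m:ℤ)-1) :=
        mul_le_mul hb1 hb2 (sq_nonneg _) (by linarith)
      have e2 : (m:ℤ)*(m:ℤ) ≤ ((u1:ℤ)*(v2:ℤ))*((u1:ℤ)*(v2:ℤ)) :=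
        mul_le_mul hcon hcon (by linarith) (by positivity)
      nlinarith [e, e2, hm1]
    exact_mod_cast hZ
  have hlt2 : u2 * v1 < m := by
    have hZ : (u2 : ℤ) * (v1 : ℤ) < (m : ℤ) := by
      by_contra hcon
      push_neg at hcon
      have e : (u2:ℤ)^2 * (v1:ℤ)^2 ≤ ((m:ℤ)-1)*((m:ℤ)-1) :=
        mul_le_mul hb3 hb4 (sq_nonneg _) (by linarith)
      have e2 : (m:ℤ)*(m:ℤ) ≤ ((u2:ℤ)*(v1:ℤ))*((u2:ℤ)*(v1:ℤ)) :=
        mul_le_mul hcon hcon (by linarith) (by positivity)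
      nlinarith [e, e2, hm1]
    exact_mod_cast hZ
  have heq : u1 * v2 = u2 * v1 := by
    have h := (ZMod.natCast_eq_natCast_iff (u1 * v2) (u2 * v1) m).mp (by push_cast; exact hkey)
    have h2 : (u1 * v2) % m = (u2 * v1) % m := h
    rwa [Nat.mod_eq_of_lt hlt1, Nat.mod_eq_of_lt hlt2] at h2
  have hdv1 : v1 ∣ v2 := by
    refine Nat.Coprime.dvd_of_dvd_mul_right hco1.symm ?_
    have h7 : v1 ∣ u2 * v1 := dvd_mul_left v1 u2
    rw [← heq] at h7
    rwa [mul_comm u1 v2] at h7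
  have hdv2 : v2 ∣ v1 := by
    refine Nat.Coprime.dvd_of_dvd_mul_right hco2.symm ?_
    have h7 : v2 ∣ u1 * v2 := dvd_mul_left v2 u1
    rw [heq] at h7
    rwa [mul_comm u2 v1] at h7
  have hv : v1 = v2 := Nat.dvd_antisymm hdv1 hdv2
  have hu : u1 = u2 := by
    have h5 : u1 * v1 = u2 * v1 := by rw [hv] at heq ⊢; exact heq
    exact Nat.eq_of_mul_eq_mul_right hv1 h5
  exact ⟨hu, hv⟩

lemma card_fiber_le (n g : ℕ) (hn : n ≠ 0) :
    ((Treps n).filter (fun p => Nat.gcd p.1 p.2 = g)).card ≤ n.divisors.card := by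
  set F := (Treps n).filter (fun p => Nat.gcd p.1 p.2 = g) with hF
  rcases Finset.eq_empty_or_nonempty F with hFe | ⟨p0, hp0⟩
  · rw [hFe]; simp
  have hp0' := Finset.mem_filter.mp hp0
  obtain ⟨hg0, hgsq, -, -, -, -, -, -⟩ := packet hp0'.1 hp0'.2
  have hmne : n / g ^ 2 ≠ 0 := by
    have : 0 < n / g ^ 2 :=
      Nat.div_pos (Nat.le_of_dvd (Nat.pos_of_ne_zero hn) hgsq) (by positivity)
    omega
  haveI : NeZero (n / g ^ 2) := ⟨hmne⟩
  have hmdvd : n / g ^ 2 ∣ n := Nat.div_dvd_of_dvd hgsq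
  have hcardR : F.card ≤ Rcard (n / g ^ 2) := by
    rw [Rcard, Nat.card_eq_fintype_card, Fintype.card_subtype]
    refine Finset.card_le_card_of_injOn
      (fun p => ((p.1 / g : ℕ) : ZMod (n / g ^ 2)) * ((p.2 / g : ℕ) : ZMod (n / g ^ 2))⁻¹)
      ?_ ?_
    · intro p hp
      have hp' := Finset.mem_filter.mp hp
      obtain ⟨-, -, hu, hv, hco, hsum, -, -⟩ := packet hp'.1 hp'.2
      simp only [Finset.mem_coe, Finset.mem_filter, Finset.mem_univ, true_and]
      exact root_of_primitive hco hsum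
    · intro p hp q hq hpq
      have hp' := Finset.mem_filter.mp hp
      have hq' := Finset.mem_filter.mp hq
      obtain ⟨-, -, hu1, hv1, hco1, hsum1, he11, he12⟩ := packet hp'.1 hp'.2
      obtain ⟨-, -, hu2, hv2, hco2, hsum2, he21, he22⟩ := packet hq'.1 hq'.2
      obtain ⟨hu, hv⟩ := inj_core hu1 hv1 hu2 hv2 hco1 hco2 hsum1 hsum2 hpq
      have a1 : p.1 = q.1 := by rw [he11, he21, hu]
      have a2 : p.2 = q.2 := by rw [he12, he22, hv]
      exact Prod.ext a1 a2
  exact hcardR.trans ((Rcard_le_card_divisors _ hmne).trans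
    (Finset.card_le_card (Nat.divisors_subset_of_dvd hn hmdvd)))

lemma Fcount_le_sq (n : ℕ) (hn : n ≠ 0) : Fcount n ≤ n.divisors.card ^ 2 := by
  rw [Fcount_eq_card]
  have hfib : ∀ p ∈ Treps n, Nat.gcd p.1 p.2 ∈ n.divisors := by
    intro p hp
    simp only [Treps, Finset.mem_filter] at hp
    obtain ⟨-, h1, h2, h3⟩ := hp
    have hd : Nat.gcd p.1 p.2 ∣ n := by
      rw [← h3]
      exact dvd_add ((Nat.gcd_dvd_left _ _).trans (dvd_pow_self _ two_ne_zero))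
        ((Nat.gcd_dvd_right _ _).trans (dvd_pow_self _ two_ne_zero))
    exact Nat.mem_divisors.mpr ⟨hd, hn⟩
  rw [Finset.card_eq_sum_card_fiberwise hfib]
  calc ∑ g ∈ n.divisors, ((Treps n).filter (fun p => Nat.gcd p.1 p.2 = g)).card
      ≤ ∑ g ∈ n.divisors, n.divisors.card :=
        Finset.sum_le_sum (fun g _ => card_fiber_le n g hn)
    _ = n.divisors.card ^ 2 := by rw [Finset.sum_const, smul_eq_mul, sq]

lemma card_divisors_le_rpow {ε : ℝ} (hε : 0 < ε) :
    ∃ C : ℝ, 1 ≤ C ∧ ∀ n : ℕ, n ≠ 0 → (n.divisors.card : ℝ) ≤ C * (n : ℝ) ^ ε := by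
  have hlog2 : 0 < Real.log 2 := Real.log_pos (by norm_num)
  set x := ε * Real.log 2 with hxdef
  have hx : 0 < x := mul_pos hε hlog2
  set K : ℝ := 1 + 1 / x with hKdef
  have hK1 : 1 ≤ K := by
    rw [hKdef]
    have : 0 < 1 / x := by positivity
    linarith
  set P : ℕ := ⌈(2 : ℝ) ^ (1 / ε)⌉₊ with hPdef
  refine ⟨K ^ P, one_le_pow₀ hK1, ?_⟩
  intro n hn
  have hcast : (n.divisors.card : ℝ)
      = ∏ p ∈ n.primeFactors, ((n.factorization p + 1 : ℕ) : ℝ) := by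
    rw [Nat.card_divisors hn]
    push_cast
    rfl
  have key : ∀ p ∈ n.primeFactors,
      ((n.factorization p + 1 : ℕ) : ℝ) ≤
        (if (p : ℝ) < (2 : ℝ) ^ (1 / ε) then K else 1) *
          (((p : ℝ) ^ (n.factorization p)) ^ ε) := by
    intro p hp
    have hp2 : 2 ≤ p := (Nat.prime_of_mem_primeFactors hp).two_le
    have hp2R : (2 : ℝ) ≤ (p : ℝ) := by exact_mod_cast hp2
    have hppos : (0 : ℝ) < (p : ℝ) := by linarith
    set a := n.factorization p with hadef
    have hrpow_eq : (((p : ℝ) ^ a) ^ ε) = ((p : ℝ) ^ ε) ^ a := by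
      rw [← Real.rpow_natCast (p : ℝ) a, ← Real.rpow_mul hppos.le,
        mul_comm, Real.rpow_mul hppos.le, Real.rpow_natCast]
    by_cases hsmall : (p : ℝ) < (2 : ℝ) ^ (1 / ε)
    · rw [if_pos hsmall]
      have hexp : 1 + (a : ℝ) * x ≤ Real.exp ((a : ℝ) * x) := by
        have := Real.add_one_le_exp ((a : ℝ) * x)
        linarith
      have h1 : ((a + 1 : ℕ) : ℝ) ≤ K * (1 + (a : ℝ) * x) := by
        push_cast
        have hax : 0 ≤ (a : ℝ) * x := by positivity
        have hinv : 0 < 1 / x := by positivity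
        have expand : K * (1 + (a : ℝ) * x) = 1 + (a : ℝ) * x + 1 / x + (a : ℝ) * (x * (1/x)) := by
          rw [hKdef]; ring
        rw [expand, mul_one_div_cancel hx.ne', mul_one]
        linarith
      have h2 : Real.exp ((a : ℝ) * x) ≤ ((p : ℝ) ^ a) ^ ε := by
        have e1 : Real.exp ((a : ℝ) * x) = (2 : ℝ) ^ ((a : ℝ) * ε) := by
          rw [Real.rpow_def_of_pos (by norm_num : (0:ℝ) < 2)]
          congr 1
          rw [hxdef]; ring
        have e2 : (2 : ℝ) ^ ((a : ℝ) * ε) ≤ (p : ℝ) ^ ((a : ℝ) * ε) := by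
          apply Real.rpow_le_rpow (by norm_num) hp2R (by positivity)
        have e3 : (p : ℝ) ^ ((a : ℝ) * ε) = ((p : ℝ) ^ a) ^ ε := by
          rw [Real.rpow_mul hppos.le, Real.rpow_natCast]
        rw [e1, ← e3]
        exact e2
      calc ((a + 1 : ℕ) : ℝ) ≤ K * (1 + (a : ℝ) * x) := h1
        _ ≤ K * Real.exp ((a : ℝ) * x) := by
            apply mul_le_mul_of_nonneg_left hexp (by linarith)
        _ ≤ K * (((p : ℝ) ^ a) ^ ε) := by
            apply mul_le_mul_of_nonneg_left h2 (by linarith)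
    · rw [if_neg hsmall, one_mul]
      push_neg at hsmall
      have h2 : (2 : ℝ) ≤ (p : ℝ) ^ ε := by
        have e1 : ((2 : ℝ) ^ (1 / ε)) ^ ε ≤ (p : ℝ) ^ ε :=
          Real.rpow_le_rpow (by positivity) hsmall hε.le
        rwa [← Real.rpow_mul (by norm_num : (0:ℝ) ≤ 2), one_div,
          inv_mul_cancel₀ hε.ne', Real.rpow_one] at e1
      have h3 : ((a + 1 : ℕ) : ℝ) ≤ (2 : ℝ) ^ a := by
        have := Nat.lt_two_pow_self (n := a)
        have h4 : (a + 1 : ℕ) ≤ 2 ^ a := this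
        exact_mod_cast h4
      rw [hrpow_eq]
      calc ((a + 1 : ℕ) : ℝ) ≤ (2 : ℝ) ^ a := h3
        _ ≤ ((p : ℝ) ^ ε) ^ a := pow_le_pow_left₀ (by norm_num) h2 a
  have step1 : (n.divisors.card : ℝ) ≤
      ∏ p ∈ n.primeFactors,
        ((if (p : ℝ) < (2 : ℝ) ^ (1 / ε) then K else 1) *
          (((p : ℝ) ^ (n.factorization p)) ^ ε)) := by
    rw [hcast]
    exact Finset.prod_le_prod (fun p _ => by positivity) key
  rw [Finset.prod_mul_distrib] at step1
  have hprod2 : ∏ p ∈ n.primeFactors, (((p : ℝ) ^ (n.factorization p)) ^ ε)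
      = (n : ℝ) ^ ε := by
    rw [Real.finset_prod_rpow _ _ (fun p _ => by positivity) ε]
    congr 1
    have h6 : (∏ p ∈ n.primeFactors, p ^ n.factorization p) = n := by
      rw [← Nat.support_factorization]
      exact Nat.factorization_prod_pow_eq_self hn
    calc ∏ p ∈ n.primeFactors, ((p : ℝ) ^ (n.factorization p))
        = ((∏ p ∈ n.primeFactors, p ^ (n.factorization p) : ℕ) : ℝ) := by push_cast; rfl
      _ = (n : ℝ) := by rw [h6]
  have hprod1 : ∏ p ∈ n.primeFactors, (if (p : ℝ) < (2 : ℝ) ^ (1 / ε) then K else (1:ℝ))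
      ≤ K ^ P := by
    rw [← Finset.prod_filter_mul_prod_filter_not n.primeFactors
      (fun p : ℕ => (p : ℝ) < (2 : ℝ) ^ (1 / ε))]
    have hA : ∏ p ∈ n.primeFactors.filter (fun p : ℕ => (p : ℝ) < (2 : ℝ) ^ (1 / ε)),
        (if (p : ℝ) < (2 : ℝ) ^ (1 / ε) then K else (1:ℝ))
        = K ^ (n.primeFactors.filter (fun p : ℕ => (p : ℝ) < (2 : ℝ) ^ (1 / ε))).card := by
      rw [Finset.prod_congr rfl (fun p hp => if_pos (Finset.mem_filter.mp hp).2),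
        Finset.prod_const]
    have hB : ∏ p ∈ n.primeFactors.filter (fun p : ℕ => ¬ ((p : ℝ) < (2 : ℝ) ^ (1 / ε))),
        (if (p : ℝ) < (2 : ℝ) ^ (1 / ε) then K else (1:ℝ)) = 1 :=
      Finset.prod_eq_one (fun p hp => if_neg (Finset.mem_filter.mp hp).2)
    rw [hA, hB, mul_one]
    apply pow_le_pow_right₀ hK1
    have hsub : (n.primeFactors.filter (fun p : ℕ => (p : ℝ) < (2 : ℝ) ^ (1 / ε)))
        ⊆ Finset.range P := by
      intro p hp
      rw [Finset.mem_filter] at hp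
      rw [Finset.mem_range]
      have h5 : (p : ℝ) < (P : ℝ) := lt_of_lt_of_le hp.2 (Nat.le_ceil _)
      exact_mod_cast h5
    calc (n.primeFactors.filter (fun p : ℕ => (p : ℝ) < (2 : ℝ) ^ (1 / ε))).card
        ≤ (Finset.range P).card := Finset.card_le_card hsub
      _ = P := Finset.card_range P
  calc (n.divisors.card : ℝ)
      ≤ (∏ p ∈ n.primeFactors, (if (p : ℝ) < (2 : ℝ) ^ (1 / ε) then K else (1:ℝ))) *
        ∏ p ∈ n.primeFactors, (((p : ℝ) ^ (n.factorization p)) ^ ε) := step1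
    _ ≤ K ^ P * (n : ℝ) ^ ε := by
        rw [hprod2]
        exact mul_le_mul_of_nonneg_right hprod1 (by positivity)

open scoped Classical

lemma sqrt_ge_y {y r c : ℕ} (hy : 1 ≤ y)
    (hdvd : (y:ℤ)^2 ∣ ((r:ℤ) - (c:ℤ)^2)) (hne : (r:ℤ) ≠ (c:ℤ)^2) :
    (y : ℝ) ≤ Real.sqrt |(r:ℝ) - (c:ℝ)^2| := by
  have habs : (y:ℤ)^2 ≤ |(r:ℤ) - (c:ℤ)^2| :=
    Int.le_of_dvd (abs_pos.mpr (sub_ne_zero.mpr hne)) ((dvd_abs _ _).mpr hdvd)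
  have habsR : ((y:ℝ))^2 ≤ |(r:ℝ) - (c:ℝ)^2| := by
    have h2 : ((|(r:ℤ) - (c:ℤ)^2| : ℤ) : ℝ) = |(r:ℝ) - (c:ℝ)^2| := by
      push_cast
      rfl
    rw [← h2]
    exact_mod_cast habs
  have h3 : Real.sqrt ((y:ℝ)^2) ≤ Real.sqrt |(r:ℝ) - (c:ℝ)^2| := Real.sqrt_le_sqrt habsR
  rwa [Real.sqrt_sq (by positivity : (0:ℝ) ≤ (y:ℝ))] at h3

lemma support_bound {B : ℝ} {y r c : ℕ} (hy : 1 ≤ y) (hc : 0 < c)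
    (hineq : ((r:ℝ) + (c:ℝ)^2) * Real.sqrt |(r:ℝ) - (c:ℝ)^2| ≤ B * y)
    (hdvd : (y:ℤ)^2 ∣ ((r:ℤ) - (c:ℤ)^2)) (hne : (r:ℤ) ≠ (c:ℤ)^2) :
    (r:ℝ) ≤ B ∧ (c:ℝ) ≤ B := by
  have hsq := sqrt_ge_y hy hdvd hne
  have hy0 : (0:ℝ) < (y:ℝ) := by exact_mod_cast hy
  have hrc : (r:ℝ) + (c:ℝ)^2 ≤ B := by
    have h1 : ((r:ℝ) + (c:ℝ)^2) * (y:ℝ) ≤ ((r:ℝ) + (c:ℝ)^2) * Real.sqrt |(r:ℝ) - (c:ℝ)^2| :=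
      mul_le_mul_of_nonneg_left hsq (by positivity)
    have h2 : ((r:ℝ) + (c:ℝ)^2) * (y:ℝ) ≤ B * (y:ℝ) := h1.trans hineq
    exact le_of_mul_le_mul_right h2 hy0
  have hc1 : (1:ℝ) ≤ (c:ℝ) := by exact_mod_cast hc
  constructor
  · nlinarith [sq_nonneg ((c:ℝ))]
  · nlinarith

lemma count_V {B : ℝ} {y c : ℕ} (N : ℕ) (hB : 0 < B) (hy : 1 ≤ y) (hc : 0 < c)
    (Q : ℕ → Prop) [DecidablePred Q]
    (hQ : ∀ r, Q r → (((r:ℝ) + (c:ℝ)^2) * Real.sqrt |(r:ℝ) - (c:ℝ)^2| ≤ B * y ∧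
        (y:ℤ)^2 ∣ ((r:ℤ) - (c:ℤ)^2) ∧ (r:ℤ) ≠ (c:ℤ)^2)) :
    (((Finset.range (N+1)).filter Q).card : ℝ) ≤ 2 * B^2 / (c:ℝ)^4 := by
  have hy0 : (0:ℝ) < (y:ℝ) := by exact_mod_cast hy
  have hc0 : (0:ℝ) < (c:ℝ) := by exact_mod_cast hc
  set M : ℝ := B^2 / (c:ℝ)^4 with hMdef
  have hM0 : 0 ≤ M := by positivity
  set K : ℤ := ⌊M⌋ with hKdef
  have hK0 : 0 ≤ K := Int.le_floor.mpr (by simpa using hM0)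
  -- injection r ↦ (r - c²)/y²
  have hinj : (((Finset.range (N+1)).filter Q).card : ℝ) ≤ (((Finset.Icc (-K) K).erase 0).card : ℝ) := by
    have hmono : ((Finset.range (N+1)).filter Q).card ≤ ((Finset.Icc (-K) K).erase 0).card := by
      refine Finset.card_le_card_of_injOn
        (fun r : ℕ => ((r:ℤ) - (c:ℤ)^2) / (y:ℤ)^2) ?_ ?_
      · intro r hr
        rw [Finset.mem_coe, Finset.mem_filter] at hr
        obtain ⟨hineq, hdvd, hne⟩ := hQ r hr.2
        obtain ⟨k, hk⟩ := hdvd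
        have hy2 : ((y:ℤ)^2) ≠ 0 := by positivity
        have hdiv : ((r:ℤ) - (c:ℤ)^2) / (y:ℤ)^2 = k := by
          rw [hk, Int.mul_ediv_cancel_left _ hy2]
        show ((r:ℤ) - (c:ℤ)^2) / (y:ℤ)^2 ∈ (Finset.Icc (-K) K).erase 0
        rw [hdiv]
        have hkne : k ≠ 0 := by
          rintro rfl
          rw [mul_zero] at hk
          exact hne (by linarith [hk])
        -- bound |k| ≤ M
        have habsk : |(k:ℝ)| ≤ M := by
          have hsqle : Real.sqrt |(r:ℝ) - (c:ℝ)^2| ≤ B * y / (c:ℝ)^2 := by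
            have h1 : (c:ℝ)^2 * Real.sqrt |(r:ℝ) - (c:ℝ)^2|
                ≤ ((r:ℝ) + (c:ℝ)^2) * Real.sqrt |(r:ℝ) - (c:ℝ)^2| := by
              apply mul_le_mul_of_nonneg_right _ (Real.sqrt_nonneg _)
              have : (0:ℝ) ≤ (r:ℝ) := by positivity
              linarith
            rw [le_div_iff₀ (by positivity)]
            calc Real.sqrt |(r:ℝ) - (c:ℝ)^2| * (c:ℝ)^2
                = (c:ℝ)^2 * Real.sqrt |(r:ℝ) - (c:ℝ)^2| := by ring
              _ ≤ ((r:ℝ) + (c:ℝ)^2) * Real.sqrt |(r:ℝ) - (c:ℝ)^2| := h1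
              _ ≤ B * y := hineq
          have habs : |(r:ℝ) - (c:ℝ)^2| ≤ (B * y / (c:ℝ)^2)^2 := by
            have h2 : Real.sqrt |(r:ℝ) - (c:ℝ)^2| ^ 2 ≤ (B * y / (c:ℝ)^2)^2 :=
              pow_le_pow_left₀ (Real.sqrt_nonneg _) hsqle 2
            rwa [Real.sq_sqrt (abs_nonneg _)] at h2
          have hcast : (r:ℝ) - (c:ℝ)^2 = (y:ℝ)^2 * (k:ℝ) := by exact_mod_cast congrArg (Int.cast : ℤ → ℝ) hk
          rw [hcast, abs_mul, abs_of_nonneg (by positivity : (0:ℝ) ≤ (y:ℝ)^2)] at habs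
          have hexp : (B * y / (c:ℝ)^2)^2 = (y:ℝ)^2 * M := by
            rw [hMdef]; field_simp
          rw [hexp] at habs
          have := (mul_le_mul_iff_of_pos_left (by positivity : (0:ℝ) < (y:ℝ)^2)).mp habs
          exact this
        rw [Finset.mem_erase, Finset.mem_Icc]
        refine ⟨hkne, ?_, ?_⟩
        · rw [neg_le]
          rw [hKdef]
          apply Int.le_floor.mpr
          push_cast
          rw [abs_le] at habsk
          linarith [habsk.1]
        · rw [hKdef]
          apply Int.le_floor.mpr
          rw [abs_le] at habsk
          exact habsk.2
      · intro r1 hr1 r2 hr2 hre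
        simp only at hre
        rw [Finset.mem_coe, Finset.mem_filter] at hr1 hr2
        obtain ⟨k1, hk1⟩ := (hQ r1 hr1.2).2.1
        obtain ⟨k2, hk2⟩ := (hQ r2 hr2.2).2.1
        have hy2 : ((y:ℤ)^2) ≠ 0 := by positivity
        rw [hk1, hk2, Int.mul_ediv_cancel_left _ hy2, Int.mul_ediv_cancel_left _ hy2] at hre
        subst hre
        have : (r1:ℤ) = (r2:ℤ) := by linarith [hk1, hk2]
        exact_mod_cast this
    exact_mod_cast hmono
  -- card of target
  have hcard : (((Finset.Icc (-K) K).erase 0).card : ℝ) ≤ 2 * M := by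
    have hmem : (0:ℤ) ∈ Finset.Icc (-K) K := by
      rw [Finset.mem_Icc]; omega
    rw [Finset.card_erase_of_mem hmem, Int.card_Icc]
    have h7 : (K + 1 - -K).toNat = 2 * K.toNat + 1 := by omega
    rw [h7]
    have h8 : ((2 * K.toNat + 1 - 1 : ℕ) : ℝ) = 2 * (K.toNat : ℝ) := by
      push_cast [Nat.add_sub_cancel]
      ring
    rw [h8]
    have h9 : ((K.toNat : ℝ)) ≤ M := by
      have : ((K.toNat : ℤ) : ℝ) = (K.toNat : ℝ) := by push_cast; rfl
      rw [← this]
      have h10 : (K.toNat : ℤ) = K := Int.toNat_of_nonneg hK0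
      rw [h10]
      exact_mod_cast Int.floor_le M
    linarith
  calc (((Finset.range (N+1)).filter Q).card : ℝ)
      ≤ (((Finset.Icc (-K) K).erase 0).card : ℝ) := hinj
    _ ≤ 2 * M := hcard
    _ = 2 * B^2 / (c:ℝ)^4 := by rw [hMdef]; ring

set_option maxHeartbeats 2000000 in
/-- For all `ε, δ > 0` there is `C` such that for every `B ≥ 1` and integer `1 ≤ y ≤ B`,
`Σ F(r) ≤ C B^(1/2+ε+3δ) y^(9/10)`, the sum being over pairs `(r,c)` of positive integers with
`(r+c²)√|r-c²| ≤ B y`, `y² ∣ r-c²`, `r ≠ c²` and `B^(1/2-δ)/y^(3/10) ≤ c ≤ B^(1/2)`. -/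
theorem stmt_16 :
    ∀ ε δ : ℝ, 0 < ε → 0 < δ → ∃ C : ℝ, ∀ B : ℝ, 1 ≤ B → ∀ y : ℕ, 1 ≤ y → (y : ℝ) ≤ B →
      (∑' rc : ℕ × ℕ,
          if 0 < rc.1 ∧ 0 < rc.2 ∧
              ((rc.1 : ℝ) + (rc.2 : ℝ) ^ 2) * Real.sqrt |(rc.1 : ℝ) - (rc.2 : ℝ) ^ 2|
                ≤ B * (y : ℝ) ∧
              ((y : ℤ)) ^ 2 ∣ ((rc.1 : ℤ) - (rc.2 : ℤ) ^ 2) ∧ (rc.1 : ℤ) ≠ (rc.2 : ℤ) ^ 2 ∧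
              B ^ ((1 : ℝ) / 2 - δ) / (y : ℝ) ^ ((3 : ℝ) / 10) ≤ (rc.2 : ℝ) ∧
              (rc.2 : ℝ) ≤ B ^ ((1 : ℝ) / 2)
            then (Fcount rc.1 : ℝ) else 0)
        ≤ C * B ^ ((1 : ℝ) / 2 + ε + 3 * δ) * (y : ℝ) ^ ((9 : ℝ) / 10) := by
  intro ε δ hε hδ
  obtain ⟨C₁, hC₁1, hC₁⟩ := card_divisors_le_rpow (show (0:ℝ) < ε/4 by linarith)
  have hC₁0 : (0:ℝ) ≤ C₁ := by linarith
  have hFc : ∀ n : ℕ, n ≠ 0 → (Fcount n : ℝ) ≤ C₁^2 * (n:ℝ) ^ (ε/2) := by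
    intro n hn
    have h1 : (Fcount n : ℝ) ≤ ((n.divisors.card : ℝ))^2 := by
      exact_mod_cast Fcount_le_sq n hn
    have h3 : ((n.divisors.card : ℝ))^2 ≤ (C₁ * (n:ℝ)^(ε/4))^2 :=
      pow_le_pow_left₀ (by positivity) (hC₁ n hn) 2
    have h4 : (C₁ * (n:ℝ)^(ε/4))^2 = C₁^2 * (n:ℝ)^(ε/2) := by
      rw [mul_pow, ← Real.rpow_natCast ((n:ℝ)^(ε/4)) 2, ← Real.rpow_mul (Nat.cast_nonneg n),
        show (ε/4) * ((2:ℕ):ℝ) = ε/2 by push_cast; ring]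
    linarith
  set C₂ : ℝ := 1 + 2/ε with hC₂def
  have hC₂0 : (0:ℝ) ≤ C₂ := by rw [hC₂def]; positivity
  refine ⟨2 * C₁^2 * C₂, ?_⟩
  intro B hB y hy hyB
  have hB0 : (0:ℝ) < B := by linarith
  have hy0 : (0:ℝ) < (y:ℝ) := by exact_mod_cast hy
  have hy1 : (1:ℝ) ≤ (y:ℝ) := by exact_mod_cast hy
  set N := ⌊B⌋₊ with hNdef
  have hN1 : 1 ≤ N := Nat.le_floor (by exact_mod_cast hB)
  have hNB : (N:ℝ) ≤ B := Nat.floor_le hB0.le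
  set c0 : ℝ := B ^ ((1:ℝ)/2 - δ) / (y:ℝ) ^ ((3:ℝ)/10) with hc0def
  have hc00 : 0 < c0 := by
    rw [hc0def]
    positivity
  have hc03 : (0:ℝ) ≤ (c0^3)⁻¹ := inv_nonneg.mpr (by positivity)
  set K0 : ℝ := C₁^2 * B^(ε/2) * (2*B^2) * (c0^3)⁻¹ with hK0def
  have hK00 : 0 ≤ K0 := by
    rw [hK0def]
    have h1 : (0:ℝ) ≤ C₁^2 * B^(ε/2) * (2*B^2) := by positivity
    exact mul_nonneg h1 hc03
  have hsupp : ∀ rc : ℕ × ℕ, rc ∉ (Finset.range (N+1) ×ˢ Finset.range (N+1)) →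
      (if 0 < rc.1 ∧ 0 < rc.2 ∧
          ((rc.1 : ℝ) + (rc.2 : ℝ) ^ 2) * Real.sqrt |(rc.1 : ℝ) - (rc.2 : ℝ) ^ 2|
            ≤ B * (y : ℝ) ∧
          ((y : ℤ)) ^ 2 ∣ ((rc.1 : ℤ) - (rc.2 : ℤ) ^ 2) ∧ (rc.1 : ℤ) ≠ (rc.2 : ℤ) ^ 2 ∧
          B ^ ((1 : ℝ) / 2 - δ) / (y : ℝ) ^ ((3 : ℝ) / 10) ≤ (rc.2 : ℝ) ∧
          (rc.2 : ℝ) ≤ B ^ ((1 : ℝ) / 2)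
        then (Fcount rc.1 : ℝ) else 0) = 0 := by
    intro rc hrc
    refine if_neg ?_
    rintro ⟨h1, h2, h3, h4, h5, -, -⟩
    obtain ⟨hrB, hcB⟩ := support_bound hy h2 h3 h4 h5
    apply hrc
    rw [Finset.mem_product, Finset.mem_range, Finset.mem_range]
    exact ⟨Nat.lt_succ_of_le (Nat.le_floor hrB), Nat.lt_succ_of_le (Nat.le_floor hcB)⟩
  rw [tsum_eq_sum hsupp]
  rw [Finset.sum_product_right]
  simp only []
  have hinner : ∀ c ∈ Finset.range (N+1),
      (∑ r ∈ Finset.range (N+1),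
        if 0 < r ∧ 0 < c ∧
            ((r : ℝ) + (c : ℝ) ^ 2) * Real.sqrt |(r : ℝ) - (c : ℝ) ^ 2| ≤ B * (y : ℝ) ∧
            ((y : ℤ)) ^ 2 ∣ ((r : ℤ) - (c : ℤ) ^ 2) ∧ (r : ℤ) ≠ (c : ℤ) ^ 2 ∧
            B ^ ((1 : ℝ) / 2 - δ) / (y : ℝ) ^ ((3 : ℝ) / 10) ≤ (c : ℝ) ∧
            (c : ℝ) ≤ B ^ ((1 : ℝ) / 2)
          then (Fcount r : ℝ) else 0)
        ≤ K0 * (1/(c:ℝ)) := by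
    intro c _
    by_cases hcz : c = 0
    · subst hcz
      have hz : ∀ r ∈ Finset.range (N+1),
          (if 0 < r ∧ 0 < 0 ∧
              ((r : ℝ) + ((0:ℕ) : ℝ) ^ 2) * Real.sqrt |(r : ℝ) - ((0:ℕ) : ℝ) ^ 2| ≤ B * (y : ℝ) ∧
              ((y : ℤ)) ^ 2 ∣ ((r : ℤ) - ((0:ℕ) : ℤ) ^ 2) ∧ (r : ℤ) ≠ ((0:ℕ) : ℤ) ^ 2 ∧
              B ^ ((1 : ℝ) / 2 - δ) / (y : ℝ) ^ ((3 : ℝ) / 10) ≤ ((0:ℕ) : ℝ) ∧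
              ((0:ℕ) : ℝ) ≤ B ^ ((1 : ℝ) / 2)
            then (Fcount r : ℝ) else 0) = 0 := by
        intro r _
        exact if_neg (by rintro ⟨-, h, -⟩; exact absurd h (lt_irrefl 0))
      rw [Finset.sum_eq_zero hz]
      rw [Nat.cast_zero, div_zero, mul_zero]
    · have hcpos : 0 < c := Nat.pos_of_ne_zero hcz
      have hcR : (0:ℝ) < (c:ℝ) := by exact_mod_cast hcpos
      rw [← Finset.sum_filter]
      set V := (Finset.range (N+1)).filter (fun r : ℕ => 0 < r ∧ 0 < c ∧
          ((r : ℝ) + (c : ℝ) ^ 2) * Real.sqrt |(r : ℝ) - (c : ℝ) ^ 2| ≤ B * (y : ℝ) ∧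
          ((y : ℤ)) ^ 2 ∣ ((r : ℤ) - (c : ℤ) ^ 2) ∧ (r : ℤ) ≠ (c : ℤ) ^ 2 ∧
          B ^ ((1 : ℝ) / 2 - δ) / (y : ℝ) ^ ((3 : ℝ) / 10) ≤ (c : ℝ) ∧
          (c : ℝ) ≤ B ^ ((1 : ℝ) / 2)) with hVdef
      rcases Finset.eq_empty_or_nonempty V with hV | ⟨r0, hr0⟩
      · rw [hV, Finset.sum_empty]
        have : (0:ℝ) ≤ 1/(c:ℝ) := by positivity
        exact mul_nonneg hK00 this
      · have hr0' := Finset.mem_filter.mp hr0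
        obtain ⟨-, -, -, -, -, hclb, -⟩ := hr0'.2
        have hterm : ∀ r ∈ V, (Fcount r : ℝ) ≤ C₁^2 * B^(ε/2) := by
          intro r hr
          rw [hVdef, Finset.mem_filter] at hr
          have h1 := hFc r (by omega)
          have hrN : r ≤ N := Nat.lt_succ_iff.mp (Finset.mem_range.mp hr.1)
          have hrB : (r:ℝ) ≤ B := le_trans (by exact_mod_cast hrN) hNB
          have h2 : (r:ℝ)^(ε/2) ≤ B^(ε/2) :=
            Real.rpow_le_rpow (by positivity) hrB (by linarith)
          calc (Fcount r : ℝ) ≤ C₁^2 * (r:ℝ)^(ε/2) := h1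
            _ ≤ C₁^2 * B^(ε/2) := mul_le_mul_of_nonneg_left h2 (by positivity)
        have hsum_le : ∑ r ∈ V, (Fcount r:ℝ) ≤ (V.card : ℝ) * (C₁^2 * B^(ε/2)) := by
          have h5 := Finset.sum_le_card_nsmul V _ _ hterm
          simpa [nsmul_eq_mul] using h5
        have hcount : (V.card : ℝ) ≤ 2*B^2/(c:ℝ)^4 := by
          rw [hVdef]
          refine count_V N hB0 hy hcpos _ ?_
          intro r h
          obtain ⟨-, -, h3, h4, h5, -, -⟩ := h
          exact ⟨h3, h4, h5⟩
        have hfrac : 2*B^2/(c:ℝ)^4 ≤ (2*B^2) * ((c0^3)⁻¹ * (1/(c:ℝ))) := by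
          have h3 : c0^3 * (c:ℝ) ≤ (c:ℝ)^4 := by
            have h6 : c0^3 ≤ (c:ℝ)^3 := pow_le_pow_left₀ hc00.le hclb 3
            nlinarith [hc00, hcR]
          calc 2*B^2/(c:ℝ)^4 = (2*B^2) * (1/(c:ℝ)^4) := by ring
            _ ≤ (2*B^2) * (1/(c0^3 * (c:ℝ))) := by
                apply mul_le_mul_of_nonneg_left _ (by positivity)
                apply one_div_le_one_div_of_le (by positivity) h3
            _ = (2*B^2) * ((c0^3)⁻¹ * (1/(c:ℝ))) := by
                rw [one_div, mul_inv, one_div]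
        calc ∑ r ∈ V, (Fcount r:ℝ) ≤ (V.card : ℝ) * (C₁^2 * B^(ε/2)) := hsum_le
          _ ≤ (2*B^2/(c:ℝ)^4) * (C₁^2 * B^(ε/2)) :=
              mul_le_mul_of_nonneg_right hcount (by positivity)
          _ ≤ ((2*B^2) * ((c0^3)⁻¹ * (1/(c:ℝ)))) * (C₁^2 * B^(ε/2)) :=
              mul_le_mul_of_nonneg_right hfrac (by positivity)
          _ = K0 * (1/(c:ℝ)) := by rw [hK0def]; ring
  have hharm : ∑ c ∈ Finset.range (N+1), (1/(c:ℝ)) ≤ C₂ * B^(ε/2) := by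
    have h1 : ∑ c ∈ Finset.range (N+1), (1/(c:ℝ)) = ((harmonic N : ℚ) : ℝ) := by
      rw [Finset.sum_range_succ']
      rw [Nat.cast_zero, div_zero, add_zero]
      rw [harmonic]
      push_cast
      refine Finset.sum_congr rfl (fun i _ => ?_)
      rw [one_div]
    have h2 : ((harmonic N : ℚ) : ℝ) ≤ 1 + Real.log N := harmonic_le_one_add_log N
    have h3 : Real.log N ≤ Real.log B := by
      apply Real.log_le_log (by exact_mod_cast hN1) hNB
    have h4 : Real.log B ≤ B^(ε/2) / (ε/2) := Real.log_le_rpow_div hB0.le (by linarith)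
    have h5 : (1:ℝ) ≤ B^(ε/2) := Real.one_le_rpow hB (by linarith)
    have h6 : B^(ε/2)/(ε/2) = (2/ε) * B^(ε/2) := by
      field_simp
    rw [h1]
    calc ((harmonic N : ℚ) : ℝ) ≤ 1 + Real.log N := h2
      _ ≤ 1 + Real.log B := by linarith
      _ ≤ B^(ε/2) + (2/ε) * B^(ε/2) := by
          have := h4.trans_eq h6
          linarith
      _ = C₂ * B^(ε/2) := by rw [hC₂def]; ring
  have e3 : (B:ℝ)^2 = B^((2:ℝ)) := by
    rw [show ((2:ℝ)) = ((2:ℕ):ℝ) by norm_num, Real.rpow_natCast]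
  have e1 : c0^3 = B^((3:ℝ)/2 - 3*δ) / (y:ℝ)^((9:ℝ)/10) := by
    rw [hc0def, div_pow]
    congr 1
    · rw [← Real.rpow_natCast (B ^ ((1:ℝ)/2 - δ)) 3, ← Real.rpow_mul hB0.le]
      congr 1
      push_cast
      ring
    · rw [← Real.rpow_natCast ((y:ℝ) ^ ((3:ℝ)/10)) 3, ← Real.rpow_mul hy0.le]
      congr 1
      push_cast
      ring
  have e2 : (c0^3)⁻¹ = (y:ℝ)^((9:ℝ)/10) * B^(-((3:ℝ)/2) + 3*δ) := by
    rw [e1, inv_div, div_eq_mul_inv, ← Real.rpow_neg hB0.le]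
    congr 1
    ring
  have e4 : B^(ε/2) * (B^((2:ℝ)) * (B^(-((3:ℝ)/2) + 3*δ) * B^(ε/2))) = B^((1:ℝ)/2+ε+3*δ) := by
    rw [← Real.rpow_add hB0, ← Real.rpow_add hB0, ← Real.rpow_add hB0]
    congr 1
    ring
  calc (∑ c ∈ Finset.range (N+1), ∑ r ∈ Finset.range (N+1),
        if 0 < r ∧ 0 < c ∧
            ((r : ℝ) + (c : ℝ) ^ 2) * Real.sqrt |(r : ℝ) - (c : ℝ) ^ 2| ≤ B * (y : ℝ) ∧
            ((y : ℤ)) ^ 2 ∣ ((r : ℤ) - (c : ℤ) ^ 2) ∧ (r : ℤ) ≠ (c : ℤ) ^ 2 ∧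
            B ^ ((1 : ℝ) / 2 - δ) / (y : ℝ) ^ ((3 : ℝ) / 10) ≤ (c : ℝ) ∧
            (c : ℝ) ≤ B ^ ((1 : ℝ) / 2)
          then (Fcount r : ℝ) else 0)
      ≤ ∑ c ∈ Finset.range (N+1), K0 * (1/(c:ℝ)) := Finset.sum_le_sum hinner
    _ = K0 * ∑ c ∈ Finset.range (N+1), (1/(c:ℝ)) := by rw [Finset.mul_sum]
    _ ≤ K0 * (C₂ * B^(ε/2)) := mul_le_mul_of_nonneg_left hharm hK00
    _ = (2 * C₁^2 * C₂) * (B^(ε/2) * (B^((2:ℝ)) * (B^(-((3:ℝ)/2) + 3*δ) * B^(ε/2))))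
          * (y:ℝ)^((9:ℝ)/10) := by
        rw [hK0def, e2, e3]
        ring
    _ = (2 * C₁^2 * C₂) * B^((1:ℝ)/2+ε+3*δ) * (y:ℝ)^((9:ℝ)/10) := by rw [e4]

end
end
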